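/- arXiv:1512.01792 — 3 statements merged into one kernel-verified Lean document; each statement's English description precedes it below -/
import Mathlib

section
/- Let F be a distribution on [-c,∞) for some c ≥ 0 such that m(F) = ∫ e^{γy} F(dy) < ∞ and F^{*2} ∈ L(γ) for some γ ≥ 0. If F ∈ OS, then a(F) := limsup_{k→∞} limsup_{x→∞} ∫_{(k, x-k]} F̄(x-y) F(dy) / (F^{*2})̄(x) < 1. -/
open MeasureTheory Filter Set Asymptotics

/-- The tail `F̄(x) = μ((x,∞))` of a distribution `μ` on `ℝ`. -/
noncomputable def tail (μ : MeasureTheory.Measure ℝ) (x : ℝ) : ℝ := (μ (Set.Ioi x)).toReal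

/-- Convolution of two distributions on `ℝ`. -/
noncomputable def mconv (μ ν : MeasureTheory.Measure ℝ) : MeasureTheory.Measure ℝ :=
  MeasureTheory.Measure.map (fun p : ℝ × ℝ => p.1 + p.2) (μ.prod ν)

/-- `iconv μ k` is the `k`-fold convolution `μ^{*k}` (with `μ^{*0} = δ₀`). -/
noncomputable def iconv (μ : MeasureTheory.Measure ℝ) : ℕ → MeasureTheory.Measure ℝ
  | 0 => MeasureTheory.Measure.dirac 0
  | n + 1 => mconv (iconv μ n) μ

/-- The class `L(γ)`: `F̄(x-t) ~ e^{γt} F̄(x)` as `x → ∞`, for every `t`. -/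
def MemL (γ : ℝ) (μ : MeasureTheory.Measure ℝ) : Prop :=
  ∀ t : ℝ, Filter.Tendsto (fun x => tail μ (x - t) / tail μ x) Filter.atTop
    (nhds (Real.exp (γ * t)))

/-- The class `OS`: `limsup_{x→∞} (F*F)̄(x) / F̄(x) < ∞`. -/
def MemOS (μ : MeasureTheory.Measure ℝ) : Prop :=
  Filter.IsBoundedUnder (· ≤ ·) Filter.atTop (fun x => tail (mconv μ μ) x / tail μ x)

section helpers
variable (F : Measure ℝ) [IsProbabilityMeasure F]

instance : IsProbabilityMeasure (mconv F F) := by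
  unfold mconv
  exact Measure.isProbabilityMeasure_map (by fun_prop)

lemma tail_nonneg (μ : Measure ℝ) (x : ℝ) : 0 ≤ tail μ x := ENNReal.toReal_nonneg

lemma tail_anti (μ : Measure ℝ) [IsFiniteMeasure μ] : Antitone (tail μ) := by
  intro a b hab
  exact ENNReal.toReal_mono (measure_ne_top μ _) (measure_mono (Set.Ioi_subset_Ioi hab))

lemma tail_eq_zero_iff (μ : Measure ℝ) [IsFiniteMeasure μ] (x : ℝ) :
    tail μ x = 0 ↔ μ (Set.Ioi x) = 0 := by
  unfold tail
  rw [ENNReal.toReal_eq_zero_iff]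
  simp [measure_ne_top μ]

lemma tail_pos_of_memL (μ : Measure ℝ) [IsProbabilityMeasure μ] {γ : ℝ} (h : MemL γ μ) (x : ℝ) :
    0 < tail μ x := by
  rcases lt_or_eq_of_le (tail_nonneg μ x) with h' | h'
  · exact h'
  exfalso
  have hz : ∀ y, x ≤ y → tail μ y = 0 := by
    intro y hy
    exact le_antisymm (h'.symm ▸ tail_anti μ hy) (tail_nonneg μ y)
  have h0 := h 0
  have : Tendsto (fun x : ℝ => tail μ (x - 0) / tail μ x) atTop (nhds 0) := by
    apply Tendsto.congr' _ tendsto_const_nhds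
    filter_upwards [eventually_ge_atTop x] with y hy
    rw [hz y hy]
    simp
  have := tendsto_nhds_unique h0 this
  simp at this

end helpers

section main
variable (F : Measure ℝ) [IsProbabilityMeasure F]

lemma mconv_tail_eq (x : ℝ) :
    (mconv F F) (Set.Ioi x) = (F.prod F) {p : ℝ × ℝ | x < p.1 + p.2} := by
  unfold mconv
  rw [Measure.map_apply (by fun_prop) measurableSet_Ioi]
  rfl

lemma tailF_pos {γ : ℝ} (h : MemL γ (mconv F F)) (x : ℝ) : 0 < tail F x := by
  rcases lt_or_eq_of_le (tail_nonneg F x) with h' | h'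
  · exact h'
  exfalso
  have hx : F (Set.Ioi x) = 0 := (tail_eq_zero_iff F x).mp h'.symm
  have hsub : {p : ℝ × ℝ | 2 * x < p.1 + p.2} ⊆
      (Set.Ioi x ×ˢ (Set.univ : Set ℝ)) ∪ ((Set.univ : Set ℝ) ×ˢ Set.Ioi x) := by
    rintro ⟨a, b⟩ hp
    simp only [Set.mem_setOf_eq] at hp
    by_cases ha : x < a
    · exact Or.inl ⟨ha, trivial⟩
    · refine Or.inr ⟨trivial, ?_⟩
      push_neg at ha
      simp only [Set.mem_Ioi]
      linarith
  have h0 : (mconv F F) (Set.Ioi (2 * x)) = 0 := by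
    rw [mconv_tail_eq]
    refine le_antisymm ?_ (zero_le)
    refine le_trans (measure_mono hsub) ?_
    refine le_trans (measure_union_le _ _) ?_
    rw [Measure.prod_prod, Measure.prod_prod, hx]
    simp
  have := tail_pos_of_memL (mconv F F) h (2 * x)
  rw [(tail_eq_zero_iff (mconv F F) (2 * x)).mpr h0] at this
  exact lt_irrefl 0 this

lemma meas_tail : Measurable (fun z : ℝ => F (Set.Ioi z)) := by
  have : Antitone (fun z : ℝ => F (Set.Ioi z)) :=
    fun a b hab => measure_mono (Set.Ioi_subset_Ioi hab)
  exact this.measurable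

/-- Key inequality: integrating the tail over `Iic (x-k)` is at most the convolution tail. -/
lemma key_ineq (x k : ℝ) :
    ∫⁻ y in Set.Iic (x - k), F (Set.Ioi (x - y)) ∂F ≤ (F.prod F) {p : ℝ × ℝ | x < p.1 + p.2} := by
  set s : Set (ℝ × ℝ) := {p : ℝ × ℝ | p.1 ≤ x - k ∧ x < p.1 + p.2} with hs
  have hms : MeasurableSet s := by
    apply MeasurableSet.inter
    · exact measurableSet_le measurable_fst measurable_const
    · exact measurableSet_lt measurable_const (measurable_fst.add measurable_snd)
  have h1 : (F.prod F) s = ∫⁻ y in Set.Iic (x - k), F (Set.Ioi (x - y)) ∂F := by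
    rw [Measure.prod_apply hms]
    rw [← lintegral_indicator measurableSet_Iic]
    congr 1
    funext a
    by_cases ha : a ≤ x - k
    · have : Prod.mk a ⁻¹' s = Set.Ioi (x - a) := by
        ext b
        simp only [hs, Set.mem_preimage, Set.mem_setOf_eq, Set.mem_Ioi]
        constructor
        · rintro ⟨-, h2⟩; linarith
        · intro h2; exact ⟨ha, by linarith⟩
      rw [this, Set.indicator_of_mem (Set.mem_Iic.mpr ha)]
    · have : Prod.mk a ⁻¹' s = ∅ := by
        ext b
        simp only [hs, Set.mem_preimage, Set.mem_setOf_eq]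
        tauto
      rw [this, Set.indicator_of_notMem (fun h => ha (Set.mem_Iic.mp h))]
      simp
  rw [← h1]
  exact measure_mono (fun p hp => hp.2)

lemma integral_tail_eq (x : ℝ) (A : Set ℝ) (hA : MeasurableSet A) :
    ∫ y in A, tail F (x - y) ∂F = (∫⁻ y in A, F (Set.Ioi (x - y)) ∂F).toReal := by
  rw [← integral_toReal]
  · rfl
  · exact ((meas_tail F).comp (by fun_prop)).aemeasurable
  · exact Filter.Eventually.of_forall (fun y => lt_of_le_of_lt prob_le_one ENNReal.one_lt_top)

lemma integrable_tail (x : ℝ) :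
    Integrable (fun y => tail F (x - y)) F := by
  refine Integrable.mono' (integrable_const 1) ?_ ?_
  · exact (((meas_tail F).comp (by fun_prop)).ennreal_toReal).aestronglyMeasurable
  · refine Filter.Eventually.of_forall (fun y => ?_)
    rw [Real.norm_eq_abs, abs_of_nonneg (tail_nonneg F _)]
    exact ENNReal.toReal_le_of_le_ofReal zero_le_one (by simpa using prob_le_one)

end main

section bounds
variable (F : Measure ℝ) [IsProbabilityMeasure F]

lemma upper_bd (x k : ℝ) :
    ∫ y in Set.Iic (x - k), tail F (x - y) ∂F ≤ tail (mconv F F) x := by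
  rw [integral_tail_eq F x _ measurableSet_Iic]
  unfold tail
  rw [mconv_tail_eq]
  apply ENNReal.toReal_mono (measure_ne_top _ _) (key_ineq F x k)

lemma split_int (x k : ℝ) (hk : k ≤ x - k) :
    ∫ y in Set.Iic k, tail F (x - y) ∂F + ∫ y in Set.Ioc k (x - k), tail F (x - y) ∂F
      = ∫ y in Set.Iic (x - k), tail F (x - y) ∂F := by
  rw [← setIntegral_union (Set.Iic_disjoint_Ioc le_rfl) measurableSet_Ioc
      (integrable_tail F x).integrableOn (integrable_tail F x).integrableOn,
    Set.Iic_union_Ioc_eq_Iic hk]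

lemma lower_bd (c x k : ℝ) (hs : F (Set.Iio (-c)) = 0) :
    tail F (x + c) * (F (Set.Iic k)).toReal ≤ ∫ y in Set.Iic k, tail F (x - y) ∂F := by
  have hae : ∀ᵐ y ∂F, -c ≤ y := by
    rw [ae_iff]
    convert hs using 2
    ext y
    simp [Set.mem_Iio]
  have hae' : ∀ᵐ y ∂(F.restrict (Set.Iic k)), tail F (x + c) ≤ tail F (x - y) := by
    filter_upwards [ae_restrict_of_ae hae] with y hy
    exact tail_anti F (by linarith)
  calc tail F (x + c) * (F (Set.Iic k)).toReal
      = ∫ _ in Set.Iic k, tail F (x + c) ∂F := by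
        rw [setIntegral_const]; ring_nf; rfl
    _ ≤ ∫ y in Set.Iic k, tail F (x - y) ∂F :=
        integral_mono_ae (integrable_const _) (integrable_tail F x).integrableOn hae'

end bounds


theorem stmt8 (c : ℝ) (hc : 0 ≤ c) (F : Measure ℝ) [IsProbabilityMeasure F]
    (hs : F (Set.Iio (-c)) = 0) (γ : ℝ) (hγ : 0 ≤ γ)
    (hm : MeasureTheory.Integrable (fun y => Real.exp (γ * y)) F)
    (hL2 : MemL γ (mconv F F)) (hOS : MemOS F) :
    Filter.limsup (fun k : ℝ =>
      Filter.limsup (fun x : ℝ =>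
        (∫ y in Set.Ioc k (x - k), tail F (x - y) ∂F) / tail (mconv F F) x) Filter.atTop)
      Filter.atTop < 1 := by
  set μ := mconv F F with hμ
  have hμpos : ∀ x, 0 < tail μ x := tail_pos_of_memL μ hL2
  have hFpos : ∀ x, 0 < tail F x := tailF_pos F hL2
  -- OS constant
  obtain ⟨C0, hC0⟩ := hOS
  rw [eventually_map] at hC0
  set C := max C0 1 with hC
  have hC1 : (1 : ℝ) ≤ C := le_max_right _ _
  have hCpos : (0 : ℝ) < C := lt_of_lt_of_le one_pos hC1
  have hOS' : ∀ᶠ x in atTop, tail μ x ≤ C * tail F x := by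
    filter_upwards [hC0] with x hx
    have := le_trans hx (le_max_left C0 1)
    rw [div_le_iff₀ (hFpos x)] at this
    linarith
  set E := Real.exp (γ * (-c)) with hE
  have hEpos : 0 < E := Real.exp_pos _
  have hE1 : E ≤ 1 := by
    rw [hE]
    apply Real.exp_le_one_iff.mpr
    nlinarith
  set ε := E / (4 * C) with hε
  have hεpos : 0 < ε := by positivity
  have hε1 : ε ≤ 1 / 4 := by
    rw [hε, div_le_div_iff₀ (by positivity) (by norm_num)]
    nlinarith
  -- ratio bound from L(γ)
  have hratio : ∀ᶠ x in atTop, E / 2 < tail μ (x + c) / tail μ x := by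
    have := (hL2 (-c)).eventually (eventually_gt_nhds (show E / 2 < Real.exp (γ * (-c)) by
      rw [← hE]; linarith))
    filter_upwards [this] with x hx
    simpa [sub_neg_eq_add] using hx
  -- mass of Iic k
  have hmass : ∀ᶠ k in atTop, (1:ℝ) / 2 ≤ (F (Set.Iic k)).toReal := by
    have h1 : Tendsto (fun k : ℝ => F (Set.Iic k)) atTop (nhds (F Set.univ)) :=
      tendsto_measure_Iic_atTop F
    have h2 : Tendsto (fun k : ℝ => (F (Set.Iic k)).toReal) atTop (nhds 1) := by
      have := (ENNReal.tendsto_toReal (by simp : F Set.univ ≠ ⊤)).comp h1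
      simpa [Function.comp_def] using this
    exact h2.eventually (eventually_ge_nhds (by norm_num))
  -- main eventual bound
  have key : ∀ᶠ k in atTop, ∀ᶠ x in atTop,
      (∫ y in Set.Ioc k (x - k), tail F (x - y) ∂F) / tail μ x ≤ 1 - ε := by
    filter_upwards [hmass] with k hk
    have hshift : Tendsto (fun x : ℝ => x + c) atTop atTop := tendsto_atTop_add_const_right _ _ tendsto_id
    filter_upwards [eventually_ge_atTop (2 * k), hratio, hshift.eventually hOS'] with x hx hr hosx
    have hkx : k ≤ x - k := by linarith
    have hD : 0 < tail μ x := hμpos x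
    -- numerator bound
    have h1 : ∫ y in Set.Ioc k (x - k), tail F (x - y) ∂F
        ≤ tail μ x - tail F (x + c) * (F (Set.Iic k)).toReal := by
      have := split_int F x k hkx
      have h2 := upper_bd F x k
      have h3 := lower_bd F c x k hs
      rw [← hμ] at h2
      linarith
    -- tail F (x+c) ≥ tail μ (x+c) / C ≥ (E/2) * tail μ x / C
    have h4 : tail μ (x + c) ≤ C * tail F (x + c) := hosx
    have h5 : (E / 2) * tail μ x < tail μ (x + c) := by
      rw [lt_div_iff₀ hD] at hr
      linarith
    have h6 : (E / 2) * tail μ x / C ≤ tail F (x + c) := by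
      rw [div_le_iff₀ hCpos]
      nlinarith
    have h7 : ∫ y in Set.Ioc k (x - k), tail F (x - y) ∂F ≤ (1 - ε) * tail μ x := by
      have h8 : tail F (x + c) * (F (Set.Iic k)).toReal ≥ ((E / 2) * tail μ x / C) * (1 / 2) := by
        apply mul_le_mul h6 hk (by norm_num) (le_of_lt (lt_of_lt_of_le (by positivity) h6))
      have h9 : ((E / 2) * tail μ x / C) * (1 / 2) = ε * tail μ x := by
        rw [hε]; field_simp; ring
      rw [h9] at h8
      linarith
    rw [div_le_iff₀ hD]
    exact h7
  -- conclude
  have fnonneg : ∀ k x : ℝ, 0 ≤ (∫ y in Set.Ioc k (x - k), tail F (x - y) ∂F) / tail μ x := by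
    intro k x
    apply div_nonneg _ (le_of_lt (hμpos x))
    exact integral_nonneg (fun y => tail_nonneg F _)
  have houter : Filter.limsup (fun k : ℝ =>
      Filter.limsup (fun x : ℝ =>
        (∫ y in Set.Ioc k (x - k), tail F (x - y) ∂F) / tail μ x) Filter.atTop)
      Filter.atTop ≤ 1 - ε := by
    apply Filter.limsup_le_of_le
    · apply Filter.isCoboundedUnder_le_of_eventually_le (l := atTop) (x := (0:ℝ))
      filter_upwards [key] with k hk
      apply Filter.le_limsup_of_frequently_le
      · exact (Filter.Eventually.of_forall (fun x => fnonneg k x)).frequently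
      · exact ⟨1 - ε, Filter.eventually_map.mpr hk⟩
    · filter_upwards [key] with k hk
      exact Filter.limsup_le_of_le
        (Filter.isCoboundedUnder_le_of_le _ (fun x => fnonneg k x)) hk
  calc _ ≤ 1 - ε := houter
    _ < 1 := by linarith
end

section
/- Fix γ > 0 and let F be the distribution on [0,∞) with tail F̄(x) = 1 for x < 1 and F̄(x) = (e^{-γx} + e^{-γ e^{k+1}})/2 for e^k ≤ x < e^{k+1}, k = 0,1,2,…. Then F ∉ L(γ); in fact, for every t > 0, liminf_{k→∞} F̄(e^{k+1} - 2t)/F̄(e^{k+1} - t) = (e^{2γt}+1)/(e^{γt}+1) < e^{γt}. -/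
open MeasureTheory Filter Set Asymptotics

theorem stmt16 (γ : ℝ) (hγ : 0 < γ) (F : Measure ℝ) [IsProbabilityMeasure F]
    (h1 : ∀ x : ℝ, x < 1 → tail F x = 1)
    (h2 : ∀ k : ℕ, ∀ x : ℝ, Real.exp k ≤ x → x < Real.exp ((k : ℝ) + 1) →
      tail F x = (Real.exp (-(γ * x)) + Real.exp (-(γ * Real.exp ((k : ℝ) + 1)))) / 2) :
    ¬ MemL γ F ∧
    ∀ t > (0 : ℝ),
      Filter.liminf (fun k : ℕ =>
          tail F (Real.exp ((k : ℝ) + 1) - 2 * t) / tail F (Real.exp ((k : ℝ) + 1) - t))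
        Filter.atTop = (Real.exp (2 * γ * t) + 1) / (Real.exp (γ * t) + 1) ∧
      (Real.exp (2 * γ * t) + 1) / (Real.exp (γ * t) + 1) < Real.exp (γ * t) := by
  -- eventual exact value of the ratio
  have key : ∀ t : ℝ, 0 < t → ∀ᶠ k : ℕ in atTop,
      tail F (Real.exp ((k : ℝ) + 1) - 2 * t) / tail F (Real.exp ((k : ℝ) + 1) - t)
        = (Real.exp (2 * γ * t) + 1) / (Real.exp (γ * t) + 1) := by
    intro t ht
    obtain ⟨N, hN⟩ := exists_nat_ge (2 * t)
    filter_upwards [eventually_ge_atTop N] with k hk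
    have hkk : Real.exp (k : ℝ) ≥ 2 * t := by
      have h1 : (N : ℝ) ≤ (k : ℝ) := by exact_mod_cast hk
      have h2 := Real.add_one_le_exp (k : ℝ)
      linarith
    have hE : Real.exp (k : ℝ) * 2 ≤ Real.exp ((k : ℝ) + 1) := by
      rw [Real.exp_add]
      have h2 : (2 : ℝ) ≤ Real.exp 1 := by
        have := Real.exp_one_gt_d9; linarith
      nlinarith [Real.exp_pos (k : ℝ)]
    have hb1 : Real.exp (k : ℝ) ≤ Real.exp ((k : ℝ) + 1) - 2 * t := by linarith
    have hb2 : Real.exp (k : ℝ) ≤ Real.exp ((k : ℝ) + 1) - t := by linarith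
    rw [h2 k _ hb1 (by linarith), h2 k _ hb2 (by linarith)]
    have hA : Real.exp (-(γ * (Real.exp ((k : ℝ) + 1) - 2 * t)))
        = Real.exp (-(γ * Real.exp ((k : ℝ) + 1))) * Real.exp (2 * γ * t) := by
      rw [← Real.exp_add]; congr 1; ring
    have hB : Real.exp (-(γ * (Real.exp ((k : ℝ) + 1) - t)))
        = Real.exp (-(γ * Real.exp ((k : ℝ) + 1))) * Real.exp (γ * t) := by
      rw [← Real.exp_add]; congr 1; ring
    rw [hA, hB]
    set A := Real.exp (-(γ * Real.exp ((k : ℝ) + 1))) with hAdef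
    have e1 : (A * Real.exp (2 * γ * t) + A) / 2 = (A / 2) * (Real.exp (2 * γ * t) + 1) := by
      ring
    have e2 : (A * Real.exp (γ * t) + A) / 2 = (A / 2) * (Real.exp (γ * t) + 1) := by
      ring
    rw [e1, e2, mul_div_mul_left _ _ (by positivity : (A / 2 : ℝ) ≠ 0)]
  -- the liminf value
  have hlim : ∀ t : ℝ, 0 < t →
      Filter.liminf (fun k : ℕ =>
          tail F (Real.exp ((k : ℝ) + 1) - 2 * t) / tail F (Real.exp ((k : ℝ) + 1) - t))
        Filter.atTop = (Real.exp (2 * γ * t) + 1) / (Real.exp (γ * t) + 1) := by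
    intro t ht
    have := Filter.liminf_congr (key t ht)
    rw [this, Filter.liminf_const]
  -- the strict inequality
  have hineq : ∀ t : ℝ, 0 < t →
      (Real.exp (2 * γ * t) + 1) / (Real.exp (γ * t) + 1) < Real.exp (γ * t) := by
    intro t ht
    have hv : (0 : ℝ) < Real.exp (γ * t) + 1 := by positivity
    rw [div_lt_iff₀ hv]
    have hsq : Real.exp (2 * γ * t) = Real.exp (γ * t) * Real.exp (γ * t) := by
      rw [← Real.exp_add]; congr 1; ring
    have h1 : (1 : ℝ) < Real.exp (γ * t) := by
      rw [← Real.exp_zero]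
      exact Real.exp_lt_exp.mpr (by positivity)
    nlinarith
  constructor
  · intro hL
    have h := hL 1
    have hx : Tendsto (fun k : ℕ => Real.exp ((k : ℝ) + 1) - 1) atTop atTop := by
      apply tendsto_atTop_add_const_right
      exact Real.tendsto_exp_atTop.comp
        (tendsto_atTop_add_const_right _ 1 tendsto_natCast_atTop_atTop)
    have h2' := h.comp hx
    have h2'' : Tendsto (fun k : ℕ =>
        tail F (Real.exp ((k : ℝ) + 1) - 2 * 1) / tail F (Real.exp ((k : ℝ) + 1) - 1))
        atTop (nhds (Real.exp (γ * 1))) := by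
      refine h2'.congr fun k => ?_
      norm_num [Function.comp]
      ring_nf
    have h3 : Tendsto (fun k : ℕ =>
        tail F (Real.exp ((k : ℝ) + 1) - 2 * 1) / tail F (Real.exp ((k : ℝ) + 1) - 1))
        atTop (nhds ((Real.exp (2 * γ * 1) + 1) / (Real.exp (γ * 1) + 1))) := by
      exact Tendsto.congr' ((key 1 one_pos).mono fun k hk => hk.symm) tendsto_const_nhds
    have heq := tendsto_nhds_unique h2'' h3
    have := hineq 1 one_pos
    linarith
  · intro t ht
    exact ⟨hlim t ht, hineq t ht⟩
end

section
/- Let F be the distribution on [0,∞) whose tail is F̄(x) = 1 for x < 1, F̄(x) = 1/(2x - 2n + 1) for 2n-1 ≤ x < 2n, and F̄(x) = 1/(2n+1) for 2n ≤ x < 2n+1, for integers n ≥ 1. Then F is long-tailed, i.e., F̄(x-t) ~ F̄(x) as x → ∞ for every t > 0. -/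
open MeasureTheory Filter Set Asymptotics

theorem tendsto_ratio_aux (a b : ℝ) :
    Filter.Tendsto (fun x : ℝ => (x + a) / (x + b)) Filter.atTop (nhds 1) := by
  have h0 : Filter.Tendsto (fun x : ℝ => (a - b) / (x + b)) Filter.atTop (nhds 0) :=
    Filter.Tendsto.div_atTop tendsto_const_nhds (tendsto_atTop_add_const_right _ _ tendsto_id)
  have h1 : Filter.Tendsto (fun x : ℝ => 1 + (a - b) / (x + b)) Filter.atTop (nhds 1) := by
    simpa using tendsto_const_nhds.add h0
  refine h1.congr' ?_
  filter_upwards [Filter.eventually_gt_atTop (-b)] with x hx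
  have hxb : x + b ≠ 0 := by linarith
  field_simp
  ring

theorem stmt17 (F : Measure ℝ) [IsProbabilityMeasure F]
    (h1 : ∀ x : ℝ, x < 1 → tail F x = 1)
    (h2 : ∀ n : ℕ, 1 ≤ n → ∀ x : ℝ, 2 * (n : ℝ) - 1 ≤ x → x < 2 * (n : ℝ) →
      tail F x = 1 / (2 * x - 2 * (n : ℝ) + 1))
    (h3 : ∀ n : ℕ, 1 ≤ n → ∀ x : ℝ, 2 * (n : ℝ) ≤ x → x < 2 * (n : ℝ) + 1 →
      tail F x = 1 / (2 * (n : ℝ) + 1)) :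
    ∀ t > (0 : ℝ),
      Filter.Tendsto (fun x => tail F (x - t) / tail F x) Filter.atTop (nhds 1) := by
  have hbound : ∀ x : ℝ, 1 ≤ x → 1 / (x + 1) ≤ tail F x ∧ tail F x ≤ 1 / x := by
    intro x hx
    set n : ℕ := ⌊(x + 1) / 2⌋₊ with hn
    have hx0 : (0 : ℝ) < x := by linarith
    have hn2 : (n : ℝ) ≤ (x + 1) / 2 := Nat.floor_le (by linarith)
    have hn3 : (x + 1) / 2 < (n : ℝ) + 1 := Nat.lt_floor_add_one _
    have hn1 : 1 ≤ n := by
      rw [hn]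
      exact Nat.le_floor (by push_cast; linarith)
    have key : ∃ d : ℝ, tail F x = 1 / d ∧ x ≤ d ∧ d ≤ x + 1 := by
      by_cases hx2 : x < 2 * (n : ℝ)
      · exact ⟨2 * x - 2 * (n : ℝ) + 1, h2 n hn1 x (by linarith) hx2, by linarith, by linarith⟩
      · exact ⟨2 * (n : ℝ) + 1, h3 n hn1 x (le_of_not_gt hx2) (by linarith),
          by linarith [le_of_not_gt hx2], by linarith [le_of_not_gt hx2]⟩
    obtain ⟨d, hd, hd1, hd2⟩ := key
    rw [hd]
    constructor
    · exact one_div_le_one_div_of_le (by linarith) hd2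
    · exact one_div_le_one_div_of_le hx0 hd1
  intro t ht
  refine tendsto_of_tendsto_of_tendsto_of_le_of_le'
    (f := fun x : ℝ => tail F (x - t) / tail F x)
    (tendsto_ratio_aux 0 (1 - t)) (tendsto_ratio_aux 1 (-t)) ?_ ?_
  · filter_upwards [Filter.eventually_ge_atTop (t + 1)] with x hx
    have hx1 : (1 : ℝ) ≤ x := by linarith
    have hxt : (1 : ℝ) ≤ x - t := by linarith
    obtain ⟨hA, hB⟩ := hbound x hx1
    obtain ⟨hC, hD⟩ := hbound (x - t) hxt
    have htx : 0 < tail F x := lt_of_lt_of_le (by positivity) hA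
    have h0 : (0 : ℝ) < x := by linarith
    calc (x + 0) / (x + (1 - t)) = (1 / (x - t + 1)) / (1 / x) := by
          rw [one_div, one_div, div_inv_eq_mul, inv_mul_eq_div]
          ring_nf
      _ ≤ tail F (x - t) / tail F x :=
          div_le_div₀ (le_trans (by positivity) hC) hC htx hB
  · filter_upwards [Filter.eventually_ge_atTop (t + 1)] with x hx
    have hx1 : (1 : ℝ) ≤ x := by linarith
    have hxt : (1 : ℝ) ≤ x - t := by linarith
    obtain ⟨hA, hB⟩ := hbound x hx1
    obtain ⟨hC, hD⟩ := hbound (x - t) hxt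
    have htx : 0 < tail F x := lt_of_lt_of_le (by positivity) hA
    have h0 : (0 : ℝ) < x - t := by linarith
    calc tail F (x - t) / tail F x ≤ (1 / (x - t)) / (1 / (x + 1)) :=
          div_le_div₀ (by positivity) hD (by positivity) hA
      _ = (x + 1) / (x + -t) := by
          rw [one_div, one_div, div_inv_eq_mul, inv_mul_eq_div]
          ring_nf
end
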